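/- For every RSF layout ((k_1,l_1),…,(k_n,l_n)) on L qubits, the total number of gates Σ_{i=1}^{n} l_i is at most ⌊L²/4⌋. Moreover, this bound is attained: the sequence ((2i−1, L−2i+1)) for i = 1,…,⌊L/2⌋ is an RSF layout on L qubits with Σ_i l_i = ⌊L²/4⌋. -/

import Mathlib

/-- An RSF (right standard form) layout on `L` qubits: a finite sequence
`((k_1,l_1),…,(k_n,l_n))` (possibly empty) of pairs of positive integers with
`k_i + 2 ≤ k_{i+1}` for consecutive entries and `1 ≤ l_i ≤ L - k_i` for each entry. -/
def IsRSF (L : ℕ) (s : List (ℕ × ℕ)) : Prop :=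
  (∀ p ∈ s, 1 ≤ p.1 ∧ 1 ≤ p.2 ∧ p.2 ≤ L - p.1) ∧
    s.Chain' fun p q => p.1 + 2 ≤ q.1

/-- The maximal RSF layout on `L` qubits: the sequence `((2i-1, L-2i+1))` for
`i = 1, …, ⌊L/2⌋`, written with `i = j + 1`, `j = 0, …, ⌊L/2⌋ - 1`. -/
def maxLayout (L : ℕ) : List (ℕ × ℕ) :=
  (List.range (L / 2)).map fun j => (2 * j + 1, L - (2 * j + 1))

lemma sq_div_four_step (a : ℕ) (h : 1 ≤ a) :
    (a + 1) ^ 2 / 4 = (a - 1) ^ 2 / 4 + a := by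
  obtain ⟨b, rfl⟩ : ∃ b, a = b + 1 := ⟨a - 1, by omega⟩
  have h1 : b + 1 - 1 = b := by omega
  have h2 : (b + 1 + 1) ^ 2 = b ^ 2 + (b + 1) * 4 := by ring
  rw [h1, h2, Nat.add_mul_div_right _ _ (by norm_num : (0:ℕ) < 4)]

lemma rsf_bound_aux (L : ℕ) :
    ∀ s : List (ℕ × ℕ), (∀ p ∈ s, 1 ≤ p.1 ∧ 1 ≤ p.2 ∧ p.2 ≤ L - p.1) →
      s.Chain' (fun p q => p.1 + 2 ≤ q.1) →
      ∀ c : ℕ, (∀ p, s.head? = some p → c ≤ p.1) →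
      (s.map Prod.snd).sum ≤ (L - c + 1) ^ 2 / 4 := by
  intro s
  induction s with
  | nil => intro _ _ c _; simp
  | cons p t ih =>
    intro hmem hchain c hc
    obtain ⟨k, l⟩ := p
    have hp := hmem (k, l) (by simp)
    simp only at hp
    obtain ⟨hk1, hl1, hlk⟩ := hp
    have hcp : c ≤ k := hc (k, l) rfl
    have hchain' : t.Chain' (fun p q => p.1 + 2 ≤ q.1) := hchain.tail
    have htmem : ∀ q ∈ t, 1 ≤ q.1 ∧ 1 ≤ q.2 ∧ q.2 ≤ L - q.1 := fun q hq => hmem q (by simp [hq])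
    have hthead : ∀ q, t.head? = some q → c + 2 ≤ q.1 := by
      intro q hq
      cases t with
      | nil => simp at hq
      | cons r u =>
        simp at hq
        have := (List.isChain_cons_cons.mp hchain).1
        subst hq
        simp only at this
        omega
    have ht := ih htmem hchain' (c + 2) hthead
    have hkL : k < L := by omega
    have hp2 : l ≤ L - c := by omega
    have key : (L - c + 1) ^ 2 / 4 = (L - (c + 2) + 1) ^ 2 / 4 + (L - c) := by
      rcases le_or_gt (c + 2) L with hc2 | hc2
      · have h1 : L - c + 1 = (L - c) + 1 := by omega
        have h2 : L - (c + 2) + 1 = (L - c) - 1 := by omega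
        rw [h1, h2, sq_div_four_step (L - c) (by omega)]
      · have e1 : L - c = 1 := by omega
        have e2 : L - (c + 2) = 0 := by omega
        rw [e1, e2]; norm_num
    simp only [List.map_cons, List.sum_cons]
    omega

lemma maxLayout_sum_aux (L : ℕ) :
    ∀ n : ℕ, 2 * n ≤ L →
      ((List.range n).map fun j => L - (2 * j + 1)).sum = n * L - n ^ 2 := by
  intro n
  induction n with
  | zero => simp
  | succ n ih =>
    intro h
    have ih' := ih (by omega)
    rw [List.range_succ, List.map_append, List.sum_append]
    simp only [List.map_cons, List.map_nil, List.sum_cons, List.sum_nil]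
    have e1 : (n + 1) * L = n * L + L := by ring
    have e2 : (n + 1) ^ 2 = n ^ 2 + 2 * n + 1 := by ring
    have e3 : n * (2 * n + 1) ≤ n * L := Nat.mul_le_mul_left _ (by omega)
    have e4 : n * (2 * n + 1) = 2 * n ^ 2 + n := by ring
    omega

/-- Every RSF layout on `L` qubits has at most `⌊L²/4⌋` gates in total, and this
bound is attained by the layout `((2i-1, L-2i+1))_{i=1,…,⌊L/2⌋}`. -/
theorem rsf_gate_count_le (L : ℕ) :
    (∀ s : List (ℕ × ℕ), IsRSF L s → (s.map Prod.snd).sum ≤ L ^ 2 / 4) ∧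
      IsRSF L (maxLayout L) ∧ ((maxLayout L).map Prod.snd).sum = L ^ 2 / 4 := by
  have hmap : (maxLayout L).map Prod.snd = (List.range (L / 2)).map fun j => L - (2 * j + 1) := by
    simp [maxLayout, List.map_map, Function.comp]
  have hsum : ((maxLayout L).map Prod.snd).sum = L ^ 2 / 4 := by
    rw [hmap, maxLayout_sum_aux L (L / 2) (by omega)]
    rcases Nat.even_or_odd L with ⟨m, hm⟩ | ⟨m, hm⟩
    · subst hm
      have hm2 : (m + m) / 2 = m := by omega
      rw [hm2]
      have h1 : (m + m) ^ 2 = m ^ 2 * 4 := by ring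
      rw [h1, Nat.mul_div_cancel _ (by norm_num : (0:ℕ) < 4)]
      have h2 : m * (m + m) = 2 * m ^ 2 := by ring
      omega
    · subst hm
      have hm2 : (2 * m + 1) / 2 = m := by omega
      rw [hm2]
      have h1 : (2 * m + 1) ^ 2 = (m ^ 2 + m) * 4 + 1 := by ring
      have h3 : ((m ^ 2 + m) * 4 + 1) / 4 = m ^ 2 + m := by omega
      rw [h1, h3]
      have h2 : m * (2 * m + 1) = 2 * m ^ 2 + m := by ring
      omega
  refine ⟨?_, ⟨?_, ?_⟩, hsum⟩
  · intro s hs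
    have hb := rsf_bound_aux L s hs.1 hs.2 1 (fun p hp => (hs.1 p (List.mem_of_mem_head? hp)).1)
    rcases Nat.eq_zero_or_pos L with h0 | h0
    · subst h0; norm_num at hb ⊢; omega
    · have hL : L - 1 + 1 = L := by omega
      rwa [hL] at hb
  · intro p hp
    unfold maxLayout at hp
    simp only [List.mem_map, List.mem_range] at hp
    obtain ⟨j, hj, rfl⟩ := hp
    refine ⟨by omega, by omega, by omega⟩
  · unfold maxLayout
    unfold List.Chain'; rw [List.isChain_map, List.isChain_iff_getElem]
    intro i h
    simp only [List.getElem_range]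
    omega
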